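/- (Double robustness, Proposition 1) Define the population estimating function Ψ(β; h, m) = E_S[h(Z) X (m(Z) − Y)] − E_T[X (m(Z) − g(Xᵀβ))], where E_S, E_T denote expectations under the source and target covariate distributions and the conditional law of Y | Z is shared. If either h(z) = h⋆(z) := p_T(z)/p_S(z) for all z, or m(z) = m⋆(z) := E[Y | Z = z] for all z, then Ψ(β; h, m) = 0 if and only if E_T[X (Y − g(Xᵀβ))] = 0; in particular β̄ solving the target equation solves Ψ(β; h, m) = 0. -/
import Mathlib


open MeasureTheory


lemma change_of_measure_aux {Ω α : Type*} [MeasurableSpace Ω] [MeasurableSpace α]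
    (μ : Measure Ω) (ν : Measure α) (Z : Ω → α) (p : α → ℝ)
    (hZ : Measurable Z) (hpme : Measurable p) (hp : ∀ z, 0 ≤ p z)
    (hmap : Measure.map Z μ = ν.withDensity (fun z => ENNReal.ofReal (p z)))
    (φ : α → ℝ) (hφ : Measurable φ) :
    ∫ ω, φ (Z ω) ∂μ = ∫ z, p z * φ z ∂ν := by
  rw [← integral_map hZ.aemeasurable hφ.aestronglyMeasurable, hmap]
  rw [show (fun z => ENNReal.ofReal (p z)) = (fun z => ((p z).toNNReal : ENNReal)) from rfl]
  rw [integral_withDensity_eq_integral_smul hpme.real_toNNReal]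
  congr 1; funext z
  simp [NNReal.smul_def, Real.coe_toNNReal _ (hp z)]

/-- Proposition 1, double robustness: if either the density-ratio model
`h = pT/pS` or the imputation model `m = m⋆` is correctly specified, then the doubly
robust estimating function `Ψ(β; h, m)` vanishes iff the target estimating equation
`E_T[X (Y − g(Xᵀβ))] = 0` holds. -/
theorem doubly_robust_estimating_equation {Ω α : Type*} [MeasurableSpace Ω] [MeasurableSpace α]
    (μS μT : Measure Ω) [IsProbabilityMeasure μS] [IsProbabilityMeasure μT]
    (ν : Measure α) (Z : Ω → α) (Y : Ω → ℝ) (q : ℕ) (x : α → Fin q → ℝ)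
    (pS pT : α → ℝ) (g : ℝ → ℝ) (mstar h m : α → ℝ) (β : Fin q → ℝ)
    (hZ : Measurable Z) (hY : Measurable Y) (hg : Measurable g)
    (hx : ∀ i, Measurable fun z => x z i)
    (hhme : Measurable h) (hmme : Measurable m) (hmsme : Measurable mstar)
    (hpSme : Measurable pS) (hpTme : Measurable pT)
    (hpS : ∀ z, 0 ≤ pS z) (hpT : ∀ z, 0 ≤ pT z)
    (hpos : ∀ z, 0 < pT z → 0 < pS z)
    -- `pS`, `pT` are the densities of `Z` under the source and target populations:
    (hmapS : Measure.map Z μS = ν.withDensity (fun z => ENNReal.ofReal (pS z)))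
    (hmapT : Measure.map Z μT = ν.withDensity (fun z => ENNReal.ofReal (pT z)))
    -- `m⋆(z) = E[Y | Z = z]`, shared across populations (tower property under both):
    (htowerS : ∀ ψ : α → ℝ, Integrable (fun ω => ψ (Z ω) * Y ω) μS →
      Integrable (fun ω => ψ (Z ω) * mstar (Z ω)) μS →
      ∫ ω, ψ (Z ω) * Y ω ∂μS = ∫ ω, ψ (Z ω) * mstar (Z ω) ∂μS)
    (htowerT : ∀ ψ : α → ℝ, Integrable (fun ω => ψ (Z ω) * Y ω) μT →
      Integrable (fun ω => ψ (Z ω) * mstar (Z ω)) μT →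
      ∫ ω, ψ (Z ω) * Y ω ∂μT = ∫ ω, ψ (Z ω) * mstar (Z ω) ∂μT)
    -- integrability of all relevant terms:
    (hint1 : ∀ i, Integrable (fun ω => h (Z ω) * x (Z ω) i * (m (Z ω) - Y ω)) μS)
    (hint2 : ∀ i, Integrable (fun ω => h (Z ω) * x (Z ω) i * Y ω) μS)
    (hint3 : ∀ i, Integrable (fun ω => h (Z ω) * x (Z ω) i * m (Z ω)) μS)
    (hint4 : ∀ i, Integrable (fun ω => h (Z ω) * x (Z ω) i * mstar (Z ω)) μS)
    (hint5 : ∀ i, Integrable (fun ω => x (Z ω) i * Y ω) μT)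
    (hint6 : ∀ i, Integrable (fun ω => x (Z ω) i * m (Z ω)) μT)
    (hint7 : ∀ i, Integrable (fun ω => x (Z ω) i * mstar (Z ω)) μT)
    (hint8 : ∀ i, Integrable (fun ω => x (Z ω) i * g (∑ j, x (Z ω) j * β j)) μT)
    -- at least one nuisance model is correctly specified:
    (hcase : (∀ z, h z = pT z / pS z) ∨ (∀ z, m z = mstar z)) :
    (∀ i, ∫ ω, h (Z ω) * x (Z ω) i * (m (Z ω) - Y ω) ∂μS
        - ∫ ω, x (Z ω) i * (m (Z ω) - g (∑ j, x (Z ω) j * β j)) ∂μT = 0)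
      ↔ (∀ i, ∫ ω, x (Z ω) i * (Y ω - g (∑ j, x (Z ω) j * β j)) ∂μT = 0) := by
  -- key: the source-side integral equals ∫_T x_i m − ∫_T x_i Y in either case
  have keyA : ∀ i, ∫ ω, h (Z ω) * x (Z ω) i * (m (Z ω) - Y ω) ∂μS
      = (∫ ω, x (Z ω) i * m (Z ω) ∂μT) - ∫ ω, x (Z ω) i * Y ω ∂μT := by
    intro i
    have hsplitS : ∫ ω, h (Z ω) * x (Z ω) i * (m (Z ω) - Y ω) ∂μS
        = (∫ ω, h (Z ω) * x (Z ω) i * m (Z ω) ∂μS)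
          - ∫ ω, h (Z ω) * x (Z ω) i * Y ω ∂μS := by
      rw [← integral_sub (hint3 i) (hint2 i)]
      congr 1; funext ω; ring
    rcases hcase with hc | hc
    · -- density-ratio model correct
      have hptw : ∀ (c : ℝ) (z : α), pS z * (h z * c) = pT z * c := by
        intro c z
        rw [hc z]
        by_cases hz : pT z = 0
        · simp [hz]
        · have hps : pS z ≠ 0 :=
            ne_of_gt (hpos z (lt_of_le_of_ne (hpT z) (Ne.symm hz)))
          field_simp
      have hcm : ∫ ω, h (Z ω) * x (Z ω) i * m (Z ω) ∂μS
          = ∫ ω, x (Z ω) i * m (Z ω) ∂μT := by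
        rw [change_of_measure_aux μS ν Z pS hZ hpSme hpS hmapS
            (fun z => h z * x z i * m z) ((hhme.mul (hx i)).mul hmme),
          change_of_measure_aux μT ν Z pT hZ hpTme hpT hmapT
            (fun z => x z i * m z) ((hx i).mul hmme)]
        congr 1; funext z
        have := hptw (x z i * m z) z
        calc pS z * (h z * x z i * m z) = pS z * (h z * (x z i * m z)) := by ring
          _ = pT z * (x z i * m z) := this
      have hcms : ∫ ω, h (Z ω) * x (Z ω) i * mstar (Z ω) ∂μS
          = ∫ ω, x (Z ω) i * mstar (Z ω) ∂μT := by
        rw [change_of_measure_aux μS ν Z pS hZ hpSme hpS hmapS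
            (fun z => h z * x z i * mstar z) ((hhme.mul (hx i)).mul hmsme),
          change_of_measure_aux μT ν Z pT hZ hpTme hpT hmapT
            (fun z => x z i * mstar z) ((hx i).mul hmsme)]
        congr 1; funext z
        have := hptw (x z i * mstar z) z
        calc pS z * (h z * x z i * mstar z) = pS z * (h z * (x z i * mstar z)) := by ring
          _ = pT z * (x z i * mstar z) := this
      have hY1 : ∫ ω, h (Z ω) * x (Z ω) i * Y ω ∂μS
          = ∫ ω, h (Z ω) * x (Z ω) i * mstar (Z ω) ∂μS :=
        htowerS (fun z => h z * x z i) (hint2 i) (hint4 i)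
      have hY2 : ∫ ω, x (Z ω) i * Y ω ∂μT
          = ∫ ω, x (Z ω) i * mstar (Z ω) ∂μT :=
        htowerT (fun z => x z i) (hint5 i) (hint7 i)
      rw [hsplitS, hcm, hY1, hcms, hY2]
    · -- imputation model correct
      have hmeq : ∀ ω, m (Z ω) = mstar (Z ω) := fun ω => hc (Z ω)
      have hS0 : ∫ ω, h (Z ω) * x (Z ω) i * m (Z ω) ∂μS
          = ∫ ω, h (Z ω) * x (Z ω) i * Y ω ∂μS := by
        simp only [hmeq]
        exact (htowerS (fun z => h z * x z i) (hint2 i) (by simpa only [hmeq] using hint4 i)).symm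
      have hT0 : ∫ ω, x (Z ω) i * m (Z ω) ∂μT
          = ∫ ω, x (Z ω) i * Y ω ∂μT := by
        simp only [hmeq]
        exact (htowerT (fun z => x z i) (hint5 i) (by simpa only [hmeq] using hint7 i)).symm
      rw [hsplitS, hS0, hT0]
      ring
  -- split target-side integrals
  have hsplitT1 : ∀ i, ∫ ω, x (Z ω) i * (m (Z ω) - g (∑ j, x (Z ω) j * β j)) ∂μT
      = (∫ ω, x (Z ω) i * m (Z ω) ∂μT)
        - ∫ ω, x (Z ω) i * g (∑ j, x (Z ω) j * β j) ∂μT := by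
    intro i
    rw [← integral_sub (hint6 i) (hint8 i)]
    congr 1; funext ω; ring
  have hsplitT2 : ∀ i, ∫ ω, x (Z ω) i * (Y ω - g (∑ j, x (Z ω) j * β j)) ∂μT
      = (∫ ω, x (Z ω) i * Y ω ∂μT)
        - ∫ ω, x (Z ω) i * g (∑ j, x (Z ω) j * β j) ∂μT := by
    intro i
    rw [← integral_sub (hint5 i) (hint8 i)]
    congr 1; funext ω; ring
  have key : ∀ i, ∫ ω, h (Z ω) * x (Z ω) i * (m (Z ω) - Y ω) ∂μS
      - ∫ ω, x (Z ω) i * (m (Z ω) - g (∑ j, x (Z ω) j * β j)) ∂μT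
      = - ∫ ω, x (Z ω) i * (Y ω - g (∑ j, x (Z ω) j * β j)) ∂μT := by
    intro i
    rw [keyA i, hsplitT1 i, hsplitT2 i]
    ring
  constructor
  · intro H i; have := key i; have := H i; linarith
  · intro H i; have := key i; have := H i; linarith
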